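/- Let c ≠ 0, ρ ∈ ℝ and κ₀ ≠ 0 with cκ₀ ≠ 1. Let G : I → ℝ be a positive, three times differentiable function on a nontrivial interval I satisfying (cκ₀ − 1)·G''(s) = G(s)·(κ₀² − ρ(cκ₀ − 1)) and G'''(s) + (κ₀² + ρ)·G'(s) = 0 for all s ∈ I. Then G is constant on I and κ₀² = ρ(cκ₀ − 1). -/

import Mathlib

/-- For a rotational surface of constant astigmatism in a 3-space form of curvature `ρ`
whose profile curve has constant curvature `κ₀`: if the positive, three times
differentiable function `G` (the length of the rotational Killing field) satisfies the
constant astigmatism condition `(cκ₀ − 1)G'' = G(κ₀² − ρ(cκ₀ − 1))` and the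
Gauss–Codazzi equation `G''' + (κ₀² + ρ)G' = 0` on a nontrivial interval `I`, then `G` is
constant and `κ₀² = ρ(cκ₀ − 1)`. -/
theorem constant_curvature_profile_flat (c ρ κ₀ : ℝ) (hc : c ≠ 0) (hκ₀ : κ₀ ≠ 0)
    (hcκ : c * κ₀ ≠ 1)
    (I : Set ℝ) (hIconn : I.OrdConnected)
    (hne : ∃ a ∈ I, ∃ b ∈ I, a ≠ b)
    (G : ℝ → ℝ) (hGpos : ∀ s ∈ I, 0 < G s)
    (hG1 : ∀ s ∈ I, DifferentiableAt ℝ G s)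
    (hG2 : ∀ s ∈ I, DifferentiableAt ℝ (deriv G) s)
    (hG3 : ∀ s ∈ I, DifferentiableAt ℝ (deriv (deriv G)) s)
    (hCA : ∀ s ∈ I,
      (c * κ₀ - 1) * deriv (deriv G) s = G s * (κ₀ ^ 2 - ρ * (c * κ₀ - 1)))
    (hGC : ∀ s ∈ I,
      deriv (deriv (deriv G)) s + (κ₀ ^ 2 + ρ) * deriv G s = 0) :
    (∀ s ∈ I, ∀ t ∈ I, G s = G t) ∧ κ₀ ^ 2 = ρ * (c * κ₀ - 1) := by
  have hconv : Convex ℝ I := convex_iff_ordConnected.mpr hIconn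
  have hsub : c * κ₀ - 1 ≠ 0 := sub_ne_zero.mpr hcκ
  set A : ℝ := (κ₀ ^ 2 - ρ * (c * κ₀ - 1)) / (c * κ₀ - 1) with hA
  -- second derivative equals A * G on I
  have hGG : ∀ s ∈ I, deriv (deriv G) s = A * G s := by
    intro s hs
    have := hCA s hs
    rw [hA, div_mul_eq_mul_div, eq_div_iff hsub]
    linarith [hCA s hs]
  -- interior is nonempty
  obtain ⟨a, ha, b, hb, hab⟩ := hne
  have hint : (interior I).Nonempty := by
    rcases hab.lt_or_gt with h | h
    · have : Set.Ioo a b ⊆ I := fun x hx => hIconn.out ha hb ⟨hx.1.le, hx.2.le⟩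
      have h2 : Set.Ioo a b ⊆ interior I := isOpen_Ioo.subset_interior_iff.mpr this
      exact ⟨(a + b) / 2, h2 ⟨by linarith, by linarith⟩⟩
    · have : Set.Ioo b a ⊆ I := fun x hx => hIconn.out hb ha ⟨hx.1.le, hx.2.le⟩
      have h2 : Set.Ioo b a ⊆ interior I := isOpen_Ioo.subset_interior_iff.mpr this
      exact ⟨(b + a) / 2, h2 ⟨by linarith, by linarith⟩⟩
  obtain ⟨y, hy⟩ := hint
  -- deriv G vanishes on the interior
  have hkey : ∀ s ∈ interior I, deriv G s = 0 := by
    intro s hs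
    have hnhds : I ∈ nhds s := mem_interior_iff_mem_nhds.mp hs
    have hsI : s ∈ I := interior_subset hs
    have hev : deriv (deriv G) =ᶠ[nhds s] fun t => A * G t :=
      Filter.eventually_of_mem hnhds (fun t ht => hGG t ht)
    have h3 : deriv (deriv (deriv G)) s = A * deriv G s := by
      rw [hev.deriv_eq, deriv_const_mul A (hG1 s hsI)]
    have hGCs := hGC s hsI
    rw [h3] at hGCs
    have hfac : (A + (κ₀ ^ 2 + ρ)) * deriv G s = 0 := by rw [add_mul]; exact hGCs
    have hAne : A + (κ₀ ^ 2 + ρ) ≠ 0 := by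
      rw [hA]
      rw [div_add' _ _ _ hsub]
      refine div_ne_zero ?_ hsub
      intro h0
      apply mul_ne_zero (mul_ne_zero hc hκ₀) (mul_ne_zero hκ₀ hκ₀)
      nlinarith [h0]
    exact (mul_eq_zero.mp hfac).resolve_left hAne
  -- deriv G vanishes on all of I, by density of the interior
  have hderiv0 : ∀ s ∈ I, deriv G s = 0 := by
    intro s hs
    -- s is in the closure of the interior
    have hclos : s ∈ closure (interior I) := by
      have hmem : ∀ n : ℕ, (1 - 1 / (n + 1 : ℝ)) • s + (1 / (n + 1 : ℝ)) • y ∈ interior I := by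
        intro n
        refine hconv.combo_self_interior_mem_interior hs hy ?_ ?_ (by ring)
        · have : (1 : ℝ) / (n + 1 : ℝ) ≤ 1 := by
            rw [div_le_one (by positivity)]; linarith [Nat.cast_nonneg (α := ℝ) n]
          linarith
        · positivity
      have h1 : Filter.Tendsto (fun n : ℕ => 1 / (n + 1 : ℝ)) Filter.atTop (nhds 0) :=
        tendsto_one_div_add_atTop_nhds_zero_nat
      have htend : Filter.Tendsto (fun n : ℕ =>
          (1 - 1 / (n + 1 : ℝ)) • s + (1 / (n + 1 : ℝ)) • y) Filter.atTop (nhds s) := by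
        have := (((tendsto_const_nhds (x := (1:ℝ)) (f := Filter.atTop (α := ℕ))).sub h1).smul
          (tendsto_const_nhds (x := s))).add (h1.smul (tendsto_const_nhds (x := y)))
        simpa using this
      exact mem_closure_of_tendsto htend (Filter.Eventually.of_forall hmem)
    have hcont : ContinuousWithinAt (deriv G) (interior I) s :=
      (hG2 s hs).continuousAt.continuousWithinAt
    have himg : deriv G s ∈ closure (deriv G '' interior I) :=
      hcont.mem_closure_image hclos
    have himg2 : deriv G '' interior I ⊆ {0} := by
      rintro _ ⟨t, ht, rfl⟩
      exact hkey t ht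
    have : deriv G s ∈ closure ({0} : Set ℝ) := closure_mono himg2 himg
    simpa using this
  constructor
  · intro s hsI t htI
    have := hconv.norm_image_sub_le_of_norm_deriv_le (f := G) (C := 0)
      (fun x hx => hG1 x hx) (fun x hx => by rw [hderiv0 x hx]; simp) hsI htI
    simp only [zero_mul] at this
    have : G s - G t = 0 := by
      have h := norm_eq_zero.mp (le_antisymm (by simpa [norm_sub_rev] using this) (norm_nonneg (G s - G t)))
      exact h
    linarith
  · -- at the interior point y, deriv (deriv G) y = 0
    have hyI : y ∈ I := interior_subset hy
    have hnhds : I ∈ nhds y := mem_interior_iff_mem_nhds.mp hy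
    have hev : deriv G =ᶠ[nhds y] fun _ => (0 : ℝ) :=
      Filter.eventually_of_mem hnhds (fun t ht => hderiv0 t ht)
    have h2 : deriv (deriv G) y = 0 := by
      rw [hev.deriv_eq]; simp
    have := hCA y hyI
    rw [h2, mul_zero] at this
    have hGy := hGpos y hyI
    have : κ₀ ^ 2 - ρ * (c * κ₀ - 1) = 0 := by
      rcases mul_eq_zero.mp this.symm with h | h
      · exact absurd h hGy.ne'
      · exact h
    linarith
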